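/- If f : ℝ^n → ℝ is convex, then every minimizer y* of y ↦ f(y) − H(y) over [0,1]^n lies in the open cube (0,1)^n, i.e., 0 < y*_i < 1 for every coordinate i. -/

import Mathlib

noncomputable def negEnt {n : ℕ} (y : Fin n → ℝ) : ℝ :=
  ∑ i, (y i * Real.log (y i) + (1 - y i) * Real.log (1 - y i))

noncomputable def phiEnt (x : ℝ) : ℝ := x * Real.log x + (1 - x) * Real.log (1 - x)

lemma phiEnt_eq (x : ℝ) : phiEnt x = -Real.binEntropy x := by
  simp [phiEnt, Real.binEntropy, Real.log_inv]; ring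

lemma phiEnt_convex : ConvexOn ℝ (Set.Icc (0:ℝ) 1) phiEnt := by
  have := Real.strictConcave_binEntropy.concaveOn.neg
  have e : phiEnt = -Real.binEntropy := funext phiEnt_eq
  rw [e]; exact this

lemma phiEnt_ge (x : ℝ) : -Real.log 2 ≤ phiEnt x := by
  rw [phiEnt_eq]; simpa using Real.binEntropy_le_log_two

lemma phiEnt_half : phiEnt (1/2) = -Real.log 2 := by
  have h : (1/2:ℝ) = 2⁻¹ := by norm_num
  rw [phiEnt_eq, h, Real.binEntropy_two_inv]

lemma negEnt_eq {n : ℕ} (y : Fin n → ℝ) : negEnt y = ∑ i, phiEnt (y i) := rfl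

theorem entropy_barrier_minimizer_interior (n : ℕ)
    (f : (Fin n → ℝ) → ℝ) (hf : ConvexOn ℝ Set.univ f)
    (ystar : Fin n → ℝ)
    (hmem : ystar ∈ Set.Icc (0 : Fin n → ℝ) 1)
    (hmin : ∀ y ∈ Set.Icc (0 : Fin n → ℝ) 1,
      f ystar + negEnt ystar ≤ f y + negEnt y) :
    ∀ i, ystar i ∈ Set.Ioo (0 : ℝ) 1 := by
  intro i
  by_contra hcon
  have h0 : (0:ℝ) ≤ ystar i := hmem.1 i
  have h1 : ystar i ≤ 1 := hmem.2 i
  have hboundary : ystar i = 0 ∨ ystar i = 1 := by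
    rcases h0.lt_or_eq with h | h
    · rcases h1.lt_or_eq with h' | h'
      · exact absurd ⟨h, h'⟩ hcon
      · exact Or.inr h'
    · exact Or.inl h.symm
  set c : Fin n → ℝ := fun _ => 1/2 with hc
  set C := f c - f ystar with hCdef
  set t := min (1/2 : ℝ) (Real.exp (-2*C)) with htdef
  have ht0 : 0 < t := lt_min (by norm_num) (Real.exp_pos _)
  have ht1 : t ≤ 1/2 := min_le_left _ _
  set y : Fin n → ℝ := fun j => (1-t) * ystar j + t * (1/2 : ℝ) with hydef
  have hyj : ∀ j, y j ∈ Set.Icc (0:ℝ) 1 := by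
    intro j
    have ha : (0:ℝ) ≤ ystar j := by simpa using hmem.1 j
    have hb : ystar j ≤ 1 := by simpa using hmem.2 j
    constructor <;> simp only [hydef] <;> nlinarith
  have hymem : y ∈ Set.Icc (0 : Fin n → ℝ) 1 :=
    ⟨fun j => (hyj j).1, fun j => (hyj j).2⟩
  -- convexity of f
  have hfle : f y ≤ (1-t) * f ystar + t * f c := by
    have h := hf.2 (Set.mem_univ ystar) (Set.mem_univ c) (by linarith : (0:ℝ) ≤ 1 - t) ht0.le (by ring)
    have : (1-t) • ystar + t • c = y := by
      funext j
      simp [hydef, hc, smul_eq_mul]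
    rwa [this, smul_eq_mul, smul_eq_mul] at h
  -- entropy bound per coordinate
  have hLlt : Real.log (t/2) < -2*C := by
    have h2 : t/2 < Real.exp (-2*C) := by
      have := min_le_right (1/2 : ℝ) (Real.exp (-2*C))
      nlinarith [Real.exp_pos (-2*C)]
    calc Real.log (t/2) < Real.log (Real.exp (-2*C)) :=
          Real.log_lt_log (by linarith) h2
      _ = -2*C := Real.log_exp _
  have hcoord : ∀ j, phiEnt (y j) - phiEnt (ystar j)
      ≤ if j = i then (t/2) * Real.log (t/2) else 0 := by
    intro j
    by_cases hji : j = i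
    · subst hji
      have hphi0 : phiEnt (ystar j) = 0 := by
        rcases hboundary with h | h <;> simp [phiEnt, h]
      have hyival : phiEnt (y j) = (t/2) * Real.log (t/2) + (1 - t/2) * Real.log (1 - t/2) := by
        rcases hboundary with h | h
        · have hv : y j = t/2 := by simp only [hydef]; rw [h]; ring
          rw [hv]; unfold phiEnt; ring
        · have hv : y j = 1 - t/2 := by simp only [hydef]; rw [h]; ring
          have e : (1:ℝ) - (1 - t/2) = t/2 := by ring
          rw [hv]; unfold phiEnt; rw [e]; ring
      have hlog : Real.log (1 - t/2) ≤ 0 := Real.log_nonpos (by linarith) (by linarith)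
      rw [if_pos rfl, hphi0, sub_zero, hyival]
      nlinarith [mul_nonpos_of_nonneg_of_nonpos (by linarith : (0:ℝ) ≤ 1 - t/2) hlog]
    · simp only [if_neg hji]
      have hmemj : ystar j ∈ Set.Icc (0:ℝ) 1 := ⟨hmem.1 j, hmem.2 j⟩
      have hhalf : (1/2 : ℝ) ∈ Set.Icc (0:ℝ) 1 := by norm_num
      have h := phiEnt_convex.2 hmemj hhalf (by linarith : (0:ℝ) ≤ 1-t) ht0.le (by ring)
      rw [smul_eq_mul, smul_eq_mul] at h
      have h2 : phiEnt (y j) ≤ (1-t) * phiEnt (ystar j) + t * phiEnt (1/2) := h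
      have h3 := phiEnt_ge (ystar j)
      rw [phiEnt_half] at h2
      nlinarith
  have hentle : negEnt y - negEnt ystar ≤ (t/2) * Real.log (t/2) := by
    rw [negEnt_eq, negEnt_eq, ← Finset.sum_sub_distrib]
    calc ∑ j, (phiEnt (y j) - phiEnt (ystar j))
        ≤ ∑ j, (if j = i then (t/2) * Real.log (t/2) else 0) :=
          Finset.sum_le_sum fun j _ => hcoord j
      _ = (t/2) * Real.log (t/2) := by
          rw [Finset.sum_ite_eq' Finset.univ i (fun _ => (t/2) * Real.log (t/2))]
          simp
  have hmain := hmin y hymem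
  have hfinal : 0 ≤ t * C + (t/2) * Real.log (t/2) := by
    have : f ystar + negEnt ystar ≤ (1-t) * f ystar + t * f c + negEnt y := by linarith
    simp only [hCdef]
    nlinarith
  nlinarith [hLlt, ht0]
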